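/- For every integer n ≥ 1 there exist β > 0, a constant 0 < a < 0.1, a dimension d, a loss function f(w; z) on ℝ^d which as a function of w is β-smooth for every data point z but is not convex, twin datasets S, S' of size n, and a data point z, such that for every T > n, coupled uniform-sampling SGD with step sizes α_t = a/(0.99·β·t) initialized at w_0 = w_0' = 0 satisfies E_A[f(w_T; z) − f(w_T'; z)] ≥ T^a/(6·n^{1+a}); in particular the uniform stability satisfies ε_stab ≥ T^a/(6·n^{1+a}). -/

import Mathlib

open Finset
open scoped RealInnerProductSpace

noncomputable section

/-- SGD iterates: `sgd f α z w0 t` is the parameter after `t` steps, where `z s` is the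
data point used at step `s` and `α s` the step size of step `s` (steps are numbered from 1). -/
def sgd {d : ℕ} {Z : Type*} (f : EuclideanSpace ℝ (Fin d) → Z → ℝ) (α : ℕ → ℝ) (z : ℕ → Z)
    (w0 : EuclideanSpace ℝ (Fin d)) : ℕ → EuclideanSpace ℝ (Fin d)
  | 0 => w0
  | t + 1 => sgd f α z w0 t - α (t + 1) • gradient (fun w => f w (z (t + 1))) (sgd f α z w0 t)

/-- Divergence `Δ_t = w_t - w_t'` of coupled SGD on the datasets `S, S'` with the common
index sequence `idx` and common initialization `w0`. -/
def sgdDelta {d n : ℕ} {Z : Type*} (f : EuclideanSpace ℝ (Fin d) → Z → ℝ) (α : ℕ → ℝ)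
    (S S' : Fin n → Z) (idx : ℕ → Fin n) (w0 : EuclideanSpace ℝ (Fin d)) (t : ℕ) :
    EuclideanSpace ℝ (Fin d) :=
  sgd f α (fun s => S (idx s)) w0 t - sgd f α (fun s => S' (idx s)) w0 t

/-- Extend a finite index tuple (steps `1,…,T`) to an index sequence `ℕ → Fin n`. -/
def extSeq {n : ℕ} (hn : 0 < n) {T : ℕ} (ω : Fin T → Fin n) : ℕ → Fin n :=
  fun t => if h : 0 < t ∧ t ≤ T then ω ⟨t - 1, by omega⟩ else ⟨0, hn⟩

/-- Expectation over uniform-sampling SGD randomness: the indices `i_1,…,i_T` are i.i.d.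
uniform on `{1,…,n}` and `g` depends on the index sequence. -/
def expA {n : ℕ} (hn : 0 < n) (T : ℕ) (g : (ℕ → Fin n) → ℝ) : ℝ :=
  (∑ ω : Fin T → Fin n, g (extSeq hn ω)) / (n : ℝ) ^ T

open Classical in
/-- Conditional expectation over uniform-sampling SGD randomness given an event `E` of the
index sequence. -/
def expACond {n : ℕ} (hn : 0 < n) (T : ℕ) (g : (ℕ → Fin n) → ℝ)
    (E : (ℕ → Fin n) → Prop) : ℝ :=
  (∑ ω ∈ univ.filter (fun ω : Fin T → Fin n => E (extSeq hn ω)), g (extSeq hn ω)) /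
    ((univ.filter (fun ω : Fin T → Fin n => E (extSeq hn ω))).card : ℝ)

namespace S9

variable {F : Type*} [NormedAddCommGroup F] [InnerProductSpace ℝ F] [CompleteSpace F]

lemma hasGradientAt_aux (v : F) (k : ℝ) (u : F) :
    HasGradientAt (fun w => ⟪v, w⟫ - k / 2 * ‖w‖ ^ 2) (v - k • u) u := by
  rw [hasGradientAt_iff_hasFDerivAt]
  have h1 : HasFDerivAt (fun w : F => ⟪v, w⟫) (innerSL ℝ v) u := (innerSL ℝ v).hasFDerivAt
  have h2 : HasFDerivAt (fun w : F => ⟪w, w⟫)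
      ((fderivInnerCLM ℝ (u, u)).comp ((ContinuousLinearMap.id ℝ F).prod
        (ContinuousLinearMap.id ℝ F))) u :=
    (hasFDerivAt_id u).inner ℝ (hasFDerivAt_id u)
  have h3 := h1.sub (h2.const_mul (k / 2))
  have hfun : (fun w : F => ⟪v, w⟫ - k / 2 * ⟪w, w⟫)
      = fun w => ⟪v, w⟫ - k / 2 * ‖w‖ ^ 2 := by
    funext w; rw [real_inner_self_eq_norm_sq]
  change HasFDerivAt (fun w : F => ⟪v, w⟫ - k / 2 * ⟪w, w⟫) _ u at h3
  rw [hfun] at h3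
  refine h3.congr_fderiv ?_
  ext y
  simp [fderivInnerCLM, real_inner_smul_left, inner_sub_left, real_inner_comm u y]
  ring

def clamp (c : ℝ) : ℝ := min (max c (-1)) 1

lemma clamp_one : clamp 1 = 1 := by norm_num [clamp]
lemma clamp_zero : clamp 0 = 0 := by norm_num [clamp]
lemma abs_clamp_le (c : ℝ) : |clamp c| ≤ 1 := by
  rw [abs_le]
  constructor
  · exact le_min (le_trans (by norm_num) (le_max_right c (-1))) (by norm_num)
  · exact min_le_right _ _

abbrev E1 := EuclideanSpace ℝ (Fin 1)

def e1 : E1 := EuclideanSpace.single 0 1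

lemma inner_e1_e1 : ⟪e1, e1⟫ = 1 := by
  simp [e1, EuclideanSpace.inner_single_left, EuclideanSpace.single_apply]

lemma norm_e1 : ‖e1‖ = 1 := by simp [e1, EuclideanSpace.norm_single]

def myf (w : E1) (z : E1 × ℝ) : ℝ := ⟪z.1, w⟫ - clamp z.2 / 2 * ‖w‖ ^ 2

lemma myf_grad (z : E1 × ℝ) (u : E1) :
    gradient (fun w => myf w z) u = z.1 - clamp z.2 • u :=
  (hasGradientAt_aux z.1 (clamp z.2) u).gradient

def traj (α : ℕ → ℝ) (b : ℕ → ℝ) : ℕ → ℝ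
  | 0 => 0
  | t + 1 => (1 + α (t + 1)) * traj α b t - α (t + 1) * b (t + 1)

lemma sgd_zero (α : ℕ → ℝ) (zs : ℕ → E1 × ℝ) (hzs : ∀ s, zs s = (0, 1)) (t : ℕ) :
    sgd myf α zs 0 t = 0 := by
  induction t with
  | zero => rfl
  | succ t ih =>
    show sgd myf α zs 0 t - α (t+1) • gradient (fun w => myf w (zs (t+1))) (sgd myf α zs 0 t) = 0
    rw [ih, hzs, myf_grad]
    simp

lemma sgd_closed {n : ℕ} (i : Fin n) (M : ℝ) (α : ℕ → ℝ) (idx : ℕ → Fin n)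
    (zs : ℕ → E1 × ℝ)
    (hzs : ∀ s, zs s = if idx s = i then (M • e1, (1:ℝ)) else (0, 1)) (t : ℕ) :
    sgd myf α zs 0 t = traj α (fun s => if idx s = i then M else 0) t • e1 := by
  induction t with
  | zero => simp [traj, sgd]
  | succ t ih =>
    show sgd myf α zs 0 t - α (t+1) • gradient (fun w => myf w (zs (t+1))) (sgd myf α zs 0 t)
      = _
    rw [ih, hzs, myf_grad]
    show _ = ((1 + α (t+1)) * traj α (fun s => if idx s = i then M else 0) t
        - α (t+1) * (if idx (t+1) = i then M else 0)) • e1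
    by_cases h : idx (t+1) = i
    · rw [if_pos h, if_pos h,
        show ((M • e1, (1:ℝ)).1) = M • e1 from rfl,
        show ((M • e1, (1:ℝ)).2) = 1 from rfl, clamp_one, one_smul]
      module
    · rw [if_neg h, if_neg h,
        show (((0:E1), (1:ℝ)).1) = (0:E1) from rfl,
        show (((0:E1), (1:ℝ)).2) = 1 from rfl, clamp_one, one_smul]
      module

lemma card_ne_fun {n T : ℕ} (j : Fin T) :
    Fintype.card ({ k : Fin T // k ≠ j } → Fin n) = n ^ (T - 1) := by
  rw [Fintype.card_fun, Fintype.card_subtype_compl, Fintype.card_subtype_eq]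
  simp

lemma sum_if_eq {n T : ℕ} (j : Fin T) (i : Fin n) (M : ℝ) :
    ∑ ω : Fin T → Fin n, (if ω j = i then M else 0) = (n : ℝ) ^ (T - 1) * M := by
  classical
  calc ∑ ω : Fin T → Fin n, (if ω j = i then M else 0)
      = ∑ p : Fin n × ({ k : Fin T // k ≠ j } → Fin n), (if p.1 = i then M else 0) :=
        Fintype.sum_equiv (Equiv.funSplitAt j (Fin n)) _ _ (fun ω => by
          simp [Equiv.funSplitAt, Equiv.piSplitAt])
    _ = ∑ x : Fin n, ∑ _r : ({ k : Fin T // k ≠ j } → Fin n), (if x = i then M else 0) := by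
        rw [Fintype.sum_prod_type]
    _ = (n : ℝ) ^ (T - 1) * M := by
        simp [Finset.sum_const, card_ne_fun (n := n) j, mul_comm]

lemma sum_traj {n T : ℕ} (hn : 0 < n) (i : Fin n) (M : ℝ) (α : ℕ → ℝ) {t : ℕ} (ht : t ≤ T) :
    ∑ ω : Fin T → Fin n, (- traj α (fun s => if extSeq hn ω s = i then M else 0) t)
      = M * (n:ℝ) ^ (T - 1) * (∏ s ∈ Icc 1 t, (1 + α s) - 1) := by
  induction t with
  | zero => simp [traj]
  | succ t ih =>
    have ht' : t ≤ T := Nat.le_of_succ_le ht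
    have hidx : ∀ ω : Fin T → Fin n, extSeq hn ω (t+1) = ω ⟨t, by omega⟩ := by
      intro ω
      unfold extSeq
      rw [dif_pos ⟨Nat.succ_pos t, ht⟩]
      rfl
    calc ∑ ω : Fin T → Fin n, (- traj α (fun s => if extSeq hn ω s = i then M else 0) (t+1))
        = ∑ ω : Fin T → Fin n,
            ((1 + α (t+1)) * (- traj α (fun s => if extSeq hn ω s = i then M else 0) t)
              + α (t+1) * (if ω ⟨t, by omega⟩ = i then M else 0)) := by
          refine Finset.sum_congr rfl (fun ω _ => ?_)
          simp only [traj, hidx ω]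
          ring
      _ = (1 + α (t+1)) *
            (∑ ω : Fin T → Fin n, (- traj α (fun s => if extSeq hn ω s = i then M else 0) t))
            + α (t+1) * ∑ ω : Fin T → Fin n, (if ω ⟨t, by omega⟩ = i then M else 0) := by
          rw [Finset.sum_add_distrib, Finset.mul_sum, Finset.mul_sum]
      _ = M * (n:ℝ) ^ (T - 1) * (∏ s ∈ Icc 1 (t+1), (1 + α s) - 1) := by
          rw [ih ht', sum_if_eq, Finset.prod_Icc_succ_top (Nat.one_le_iff_ne_zero.2
            (Nat.succ_ne_zero t))]
          ring

lemma prod_bound {κ : ℝ} (hκ0 : 0 ≤ κ) (hκ1 : κ ≤ 1) (T : ℕ) :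
    ((T : ℝ) + 1) ^ κ ≤ ∏ s ∈ Icc 1 T, (1 + κ / s) := by
  induction T with
  | zero => simp
  | succ T ih =>
    rw [Finset.prod_Icc_succ_top (Nat.one_le_iff_ne_zero.2 (Nat.succ_ne_zero T))]
    have hT1 : (0:ℝ) < (T:ℝ) + 1 := by positivity
    have key : ((T:ℝ) + 1 + 1) ^ κ ≤ ((T:ℝ) + 1) ^ κ * (1 + κ / ((T:ℝ) + 1)) := by
      have h1 : ((T:ℝ) + 1 + 1) = ((T:ℝ) + 1) * (1 + 1 / ((T:ℝ) + 1)) := by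
        field_simp
      rw [h1, Real.mul_rpow (by positivity) (by positivity)]
      have h2 : (1 + 1 / ((T:ℝ) + 1)) ^ κ ≤ 1 + κ / ((T:ℝ) + 1) := by
        have := rpow_one_add_le_one_add_mul_self
          (s := 1 / ((T:ℝ) + 1)) (by linarith [one_div_nonneg.mpr hT1.le]) hκ0 hκ1
        calc (1 + 1 / ((T:ℝ) + 1)) ^ κ ≤ 1 + κ * (1 / ((T:ℝ) + 1)) := this
          _ = 1 + κ / ((T:ℝ) + 1) := by ring
      exact mul_le_mul_of_nonneg_left h2 (by positivity)
    have hcast : ((T+1 : ℕ) : ℝ) = (T:ℝ) + 1 := by push_cast; ring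
    rw [hcast]
    refine key.trans ?_
    have hpos : (0:ℝ) ≤ 1 + κ / ((T:ℝ)+1) := by positivity
    exact mul_le_mul_of_nonneg_right ih hpos

end S9

open S9

/-- stability lower bound for non-convex smooth losses with step sizes
`α_t = a/(0.99βt)`. -/
theorem statement9 (n : ℕ) (hn : 0 < n) :
    ∃ (β a : ℝ), 0 < β ∧ 0 < a ∧ a < 0.1 ∧
    ∃ (d : ℕ) (f : EuclideanSpace ℝ (Fin d) → EuclideanSpace ℝ (Fin d) × ℝ → ℝ)
      (S S' : Fin n → EuclideanSpace ℝ (Fin d) × ℝ) (i : Fin n)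
      (z : EuclideanSpace ℝ (Fin d) × ℝ),
      -- f is β-smooth in w for every data point, but not convex
      (∀ z u v, ‖gradient (fun w => f w z) u - gradient (fun w => f w z) v‖ ≤ β * ‖u - v‖) ∧
      (∃ z, ¬ ConvexOn ℝ Set.univ (fun w => f w z)) ∧
      -- S, S' are twin datasets differing exactly at index i
      (∀ j, j ≠ i → S j = S' j) ∧ S i ≠ S' i ∧
      -- SGD with step sizes α_t = a/(0.99βt) from w₀ = 0, for every horizon T > n
      (∀ T : ℕ, n < T →
        expA hn T (fun idx =>
            f (sgd f (fun t => a / (0.99 * β * t)) (fun s => S (idx s)) 0 T) z -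
              f (sgd f (fun t => a / (0.99 * β * t)) (fun s => S' (idx s)) 0 T) z) ≥
          (T : ℝ) ^ a / (6 * (n : ℝ) ^ (1 + a)) ∧
        -- in particular, uniform stability is at least T^a/(6 n^{1+a})
        (∀ ε : ℝ,
          (∀ (Sa Sb : Fin n → EuclideanSpace ℝ (Fin d) × ℝ) (ia : Fin n),
              (∀ j, j ≠ ia → Sa j = Sb j) →
              ∀ za, expA hn T (fun idx =>
                |f (sgd f (fun t => a / (0.99 * β * t)) (fun s => Sa (idx s)) 0 T) za -
                  f (sgd f (fun t => a / (0.99 * β * t)) (fun s => Sb (idx s)) 0 T) za|) ≤ ε) →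
            (T : ℝ) ^ a / (6 * (n : ℝ) ^ (1 + a)) ≤ ε)) := by
    classical
  have hn0 : (0:ℝ) < (n:ℝ) := by exact_mod_cast hn
  set c : ℝ := 1 - (2:ℝ) ^ (-(0.05:ℝ)) with hc_def
  have hc : 0 < c := by
    have h := Real.rpow_lt_one_of_one_lt_of_neg (show (1:ℝ) < 2 by norm_num)
      (show -(0.05:ℝ) < 0 by norm_num)
    rw [hc_def]; linarith
  set M : ℝ := (n : ℝ) / c with hM_def
  have hM : 0 < M := div_pos hn0 hc
  refine ⟨1, 0.05, one_pos, by norm_num, by norm_num, 1, myf,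
    (fun _ => (0, 1)), (fun j => if j = ⟨0, hn⟩ then (M • e1, 1) else (0, 1)),
    ⟨0, hn⟩, (e1, 0), ?_, ?_, ?_, ?_, ?_⟩
  · -- smoothness
    intro z u v
    rw [myf_grad, myf_grad,
      show (z.1 - clamp z.2 • u) - (z.1 - clamp z.2 • v) = clamp z.2 • (v - u) by module,
      norm_smul, Real.norm_eq_abs, norm_sub_rev v u]
    exact mul_le_mul_of_nonneg_right (abs_clamp_le _) (norm_nonneg _)
  · -- nonconvexity
    refine ⟨(0, 1), fun hconv => ?_⟩
    have h2 := hconv.2 (Set.mem_univ e1) (Set.mem_univ (-e1))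
      (by norm_num : (0:ℝ) ≤ 1/2) (by norm_num : (0:ℝ) ≤ 1/2) (by norm_num)
    rw [show (1/2 : ℝ) • e1 + (1/2 : ℝ) • (-e1) = 0 by module] at h2
    simp only [myf, clamp_one, smul_eq_mul, inner_zero_left, norm_zero, norm_neg,
      norm_e1] at h2
    norm_num at h2
  · -- twin equality off i
    intro j hj
    simp [if_neg hj]
  · -- twin difference at i
    simp only [if_pos rfl]
    intro h
    have h1 : (0 : E1) = M • e1 := congrArg Prod.fst h
    have h2 := congrArg (fun x => x 0) h1
    simp [e1, EuclideanSpace.single_apply, PiLp.smul_apply] at h2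
    exact absurd h2.symm (ne_of_gt hM)
  · -- main bound
    intro T hT
    have hT1 : 1 ≤ T := by omega
    have hT2 : 2 ≤ T := by omega
    have hTr : (1:ℝ) ≤ (T:ℝ) := by exact_mod_cast hT1
    have hTr2 : (2:ℝ) ≤ (T:ℝ) := by exact_mod_cast hT2
    set A : ℕ → ℝ := fun t => (0.05:ℝ) / (0.99 * 1 * (t:ℝ)) with hA_def
    have hsummand : ∀ idx : ℕ → Fin n,
        myf (sgd myf A (fun s => ((fun _ : Fin n => ((0:E1),(1:ℝ))) (idx s))) 0 T) (e1, 0)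
          - myf (sgd myf A (fun s => ((fun j : Fin n => if j = (⟨0, hn⟩ : Fin n)
              then (M • e1, (1:ℝ)) else (0, 1)) (idx s))) 0 T) (e1, 0)
          = - traj A (fun s => if idx s = (⟨0, hn⟩ : Fin n) then M else 0) T := by
      intro idx
      rw [sgd_zero A _ (fun s => rfl), sgd_closed ⟨0, hn⟩ M A idx _ (fun s => rfl)]
      simp [myf, clamp_zero, real_inner_smul_right, inner_e1_e1, e1,
        EuclideanSpace.single_apply]
    have hnp : ((n:ℝ)) ^ (T-1) ≠ 0 := pow_ne_zero _ (ne_of_gt hn0)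
    have hnpow : (n:ℝ) ^ T = (n:ℝ) ^ (T-1) * (n:ℝ) := by
      rw [← pow_succ]; congr 1; omega
    have hexp : expA hn T (fun idx =>
          myf (sgd myf A (fun s => ((fun _ : Fin n => ((0:E1),(1:ℝ))) (idx s))) 0 T) (e1, 0)
          - myf (sgd myf A (fun s => ((fun j : Fin n => if j = (⟨0, hn⟩ : Fin n)
              then (M • e1, (1:ℝ)) else (0, 1)) (idx s))) 0 T) (e1, 0))
        = M * (∏ s ∈ Icc 1 T, (1 + A s) - 1) / n := by
      unfold expA
      rw [Finset.sum_congr rfl (fun ω _ => hsummand (extSeq hn ω)),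
        sum_traj hn _ M A le_rfl, hnpow]
      field_simp
    have hP : (T:ℝ) ^ (0.05:ℝ) ≤ ∏ s ∈ Icc 1 T, (1 + A s) := by
      have hκ : ∏ s ∈ Icc 1 T, (1 + A s)
          = ∏ s ∈ Icc 1 T, (1 + ((0.05:ℝ)/0.99) / s) := by
        refine Finset.prod_congr rfl (fun s _ => ?_)
        rw [hA_def, div_div]
        norm_num
      rw [hκ]
      refine le_trans ?_ (prod_bound (by norm_num) (by norm_num) T)
      calc (T:ℝ) ^ (0.05:ℝ) ≤ (T:ℝ) ^ ((0.05:ℝ)/0.99) :=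
            Real.rpow_le_rpow_of_exponent_le hTr (by norm_num)
        _ ≤ ((T:ℝ) + 1) ^ ((0.05:ℝ)/0.99) :=
            Real.rpow_le_rpow (by positivity) (by linarith) (by norm_num)
    have hTa1 : (1:ℝ) ≤ (2:ℝ) ^ (-(0.05:ℝ)) * (T:ℝ) ^ (0.05:ℝ) := by
      have h2T : (2:ℝ) ^ (0.05:ℝ) ≤ (T:ℝ) ^ (0.05:ℝ) :=
        Real.rpow_le_rpow (by norm_num) hTr2 (by norm_num)
      have h2pos : (0:ℝ) < (2:ℝ) ^ (0.05:ℝ) := Real.rpow_pos_of_pos (by norm_num) _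
      rw [Real.rpow_neg (by norm_num), inv_mul_eq_div, le_div_iff₀ h2pos, one_mul]
      exact h2T
    have hPm1 : c * (T:ℝ) ^ (0.05:ℝ) ≤ ∏ s ∈ Icc 1 T, (1 + A s) - 1 := by
      have e : c * (T:ℝ) ^ (0.05:ℝ)
          = (T:ℝ) ^ (0.05:ℝ) - (2:ℝ) ^ (-(0.05:ℝ)) * (T:ℝ) ^ (0.05:ℝ) := by
        rw [hc_def]; ring
      linarith
    have hfinal : (T:ℝ) ^ (0.05:ℝ) ≤ M * (∏ s ∈ Icc 1 T, (1 + A s) - 1) / n := by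
      have h1 : M * (c * (T:ℝ) ^ (0.05:ℝ)) / (n:ℝ)
          ≤ M * (∏ s ∈ Icc 1 T, (1 + A s) - 1) / (n:ℝ) := by
        gcongr
      have h2 : M * (c * (T:ℝ) ^ (0.05:ℝ)) / (n:ℝ) = (T:ℝ) ^ (0.05:ℝ) := by
        rw [hM_def]
        field_simp
      linarith
    have hrhs : (T:ℝ) ^ (0.05:ℝ) / (6 * (n:ℝ) ^ ((1:ℝ) + 0.05)) ≤ (T:ℝ) ^ (0.05:ℝ) := by
      apply div_le_self (Real.rpow_nonneg (le_of_lt (lt_of_lt_of_le zero_lt_one hTr)) _)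
      have hge : (1:ℝ) ≤ (n:ℝ) ^ ((1:ℝ) + 0.05) := by
        calc (1:ℝ) = (1:ℝ) ^ ((1:ℝ) + 0.05) := (Real.one_rpow _).symm
          _ ≤ (n:ℝ) ^ ((1:ℝ) + 0.05) :=
            Real.rpow_le_rpow (by norm_num) (by exact_mod_cast hn) (by norm_num)
      linarith
    have hmain : expA hn T (fun idx =>
          myf (sgd myf A (fun s => ((fun _ : Fin n => ((0:E1),(1:ℝ))) (idx s))) 0 T) (e1, 0)
          - myf (sgd myf A (fun s => ((fun j : Fin n => if j = (⟨0, hn⟩ : Fin n)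
              then (M • e1, (1:ℝ)) else (0, 1)) (idx s))) 0 T) (e1, 0))
        ≥ (T:ℝ) ^ (0.05:ℝ) / (6 * (n:ℝ) ^ ((1:ℝ) + 0.05)) := by
      rw [hexp]
      exact le_trans hrhs hfinal
    refine ⟨hmain, ?_⟩
    intro ε hε
    have h1 := hε (fun _ => (0, 1)) (fun j => if j = ⟨0, hn⟩ then (M • e1, 1) else (0, 1))
      ⟨0, hn⟩ (fun j hj => by simp [if_neg hj]) (e1, 0)
    have h2 : expA hn T (fun idx =>
          myf (sgd myf A (fun s => ((fun _ : Fin n => ((0:E1),(1:ℝ))) (idx s))) 0 T) (e1, 0)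
          - myf (sgd myf A (fun s => ((fun j : Fin n => if j = (⟨0, hn⟩ : Fin n)
              then (M • e1, (1:ℝ)) else (0, 1)) (idx s))) 0 T) (e1, 0))
        ≤ expA hn T (fun idx =>
          |myf (sgd myf A (fun s => ((fun _ : Fin n => ((0:E1),(1:ℝ))) (idx s))) 0 T) (e1, 0)
          - myf (sgd myf A (fun s => ((fun j : Fin n => if j = (⟨0, hn⟩ : Fin n)
              then (M • e1, (1:ℝ)) else (0, 1)) (idx s))) 0 T) (e1, 0)|) := by
      unfold expA
      apply (div_le_div_iff_of_pos_right (by positivity)).mpr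
      exact Finset.sum_le_sum (fun ω _ => le_abs_self _)
    exact le_trans (le_trans hmain h2) h1
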